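/- There exists an absolute constant c ≥ 1 such that for every v ≥ 2 and every a with 0 ≤ a ≤ 1/v, c⁻¹ / log v ≤ ∫_{v·a}^{v} e^{−s} · s^{1/2} / (1 − log s + log v) ds ≤ c / log v. -/

import Mathlib

open MeasureTheory Real

lemma int_exp_half (p q : ℝ) :
    ∫ s in p..q, Real.exp (-s/2) = 2*Real.exp (-p/2) - 2*Real.exp (-q/2) := by
  have h : ∀ s : ℝ, HasDerivAt (fun t : ℝ => -2 * Real.exp (-t/2)) (Real.exp (-s/2)) s := by
    intro s
    have h1 : HasDerivAt (fun t : ℝ => -t/2) (-1/2) s := (hasDerivAt_id s).neg.div_const 2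
    have h2 := (h1.exp).const_mul (-2)
    rw [show Real.exp (-s/2) = -2 * (Real.exp (-s/2) * (-1/2)) by ring]
    exact h2
  rw [intervalIntegral.integral_eq_sub_of_hasDerivAt (fun s _ => h s)
    ((Real.continuous_exp.comp (by continuity)).intervalIntegrable p q)]
  ring

lemma denom_ge_one (v s : ℝ) (hv : 1 ≤ v) (hs : 0 ≤ s) (hsv : s ≤ v) :
    1 ≤ 1 - Real.log s + Real.log v := by
  have hv0 : (0:ℝ) ≤ Real.log v := Real.log_nonneg hv
  rcases le_or_gt s 1 with h | h
  · have : Real.log s ≤ 0 := by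
      rcases eq_or_lt_of_le hs with h0 | h0
      · simp [← h0]
      · exact Real.log_nonpos (le_of_lt h0) h
    linarith
  · have : Real.log s ≤ Real.log v := Real.log_le_log (by linarith) hsv
    linarith

lemma integrable_f (v p q : ℝ) (hv : 2 ≤ v) (hp : 0 ≤ p) (hq : q ≤ v) (hpq : p ≤ q) :
    IntervalIntegrable (fun s => Real.exp (-s) * Real.sqrt s / (1 - Real.log s + Real.log v))
      volume p q := by
  rw [intervalIntegrable_iff_integrableOn_Ioc_of_le hpq]
  have hmeas : AEStronglyMeasurable
      (fun s => Real.exp (-s) * Real.sqrt s / (1 - Real.log s + Real.log v))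
      (volume.restrict (Set.Ioc p q)) := by
    apply Measurable.aestronglyMeasurable
    exact ((Real.measurable_exp.comp measurable_neg).mul
      Real.continuous_sqrt.measurable).div
      ((measurable_const.sub Real.measurable_log).add measurable_const)
  apply Integrable.mono' (g := fun _ => Real.sqrt v) (integrableOn_const measure_Ioc_lt_top.ne)
    hmeas
  filter_upwards [ae_restrict_mem measurableSet_Ioc] with s hs
  have hs0 : 0 ≤ s := le_trans hp (le_of_lt hs.1)
  have hsv : s ≤ v := le_trans hs.2 hq
  have hd : 1 ≤ 1 - Real.log s + Real.log v := denom_ge_one v s (by linarith) hs0 hsv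
  rw [Real.norm_eq_abs, abs_of_nonneg (by positivity)]
  calc Real.exp (-s) * Real.sqrt s / (1 - Real.log s + Real.log v)
      ≤ Real.exp (-s) * Real.sqrt s / 1 := by
        apply div_le_div_of_nonneg_left (by positivity) one_pos hd
    _ = Real.exp (-s) * Real.sqrt s := by ring
    _ ≤ 1 * Real.sqrt v := by
        apply mul_le_mul (Real.exp_le_one_iff.2 (by linarith)) (Real.sqrt_le_sqrt hsv)
          (Real.sqrt_nonneg s) one_pos.le
    _ = Real.sqrt v := one_mul _

set_option maxHeartbeats 1000000

lemma sqrt_le_self' {s : ℝ} (h : 1 ≤ s) : Real.sqrt s ≤ s := by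
  have h2 : Real.sqrt s ≤ Real.sqrt (s*s) := Real.sqrt_le_sqrt (by nlinarith)
  rwa [Real.sqrt_mul_self (by linarith)] at h2

theorem stmt_8 :
    ∃ c : ℝ, 1 ≤ c ∧ ∀ v a : ℝ, 2 ≤ v → 0 ≤ a → a ≤ 1 / v →
      c⁻¹ / Real.log v
        ≤ (∫ s in (v * a)..v, Real.exp (-s) * Real.sqrt s / (1 - Real.log s + Real.log v)) ∧
      (∫ s in (v * a)..v, Real.exp (-s) * Real.sqrt s / (1 - Real.log s + Real.log v))
        ≤ c / Real.log v := by
  have lf := integrable_f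
  have dg := denom_ge_one
  have ie := int_exp_half
  refine ⟨25, by norm_num, ?_⟩
  intro v a hv ha hav
  have hv1 : (1:ℝ) ≤ v := by linarith
  have hv0 : (0:ℝ) ≤ v := by linarith
  have hlv : 0 < Real.log v := Real.log_pos (by linarith)
  have hl2 : (0.6931471803:ℝ) < Real.log 2 := Real.log_two_gt_d9
  have hlv2 : Real.log 2 ≤ Real.log v := Real.log_le_log (by norm_num) hv
  have hva0 : 0 ≤ v * a := mul_nonneg hv0 ha
  have hva1 : v * a ≤ 1 := by
    calc v * a ≤ v * (1/v) := mul_le_mul_of_nonneg_left hav hv0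
      _ = 1 := by field_simp
  set f : ℝ → ℝ := fun s => Real.exp (-s) * Real.sqrt s / (1 - Real.log s + Real.log v) with hfdef
  have hfnn : ∀ s : ℝ, 0 ≤ s → s ≤ v → 0 ≤ f s := by
    intro s h0 h1
    have := dg v s hv1 h0 h1
    apply div_nonneg (by positivity) (by linarith)
  have hsv1 : 1 ≤ Real.sqrt v := by
    rw [show (1:ℝ) = Real.sqrt 1 by simp]
    exact Real.sqrt_le_sqrt hv1
  have hsvv : Real.sqrt v ≤ v := sqrt_le_self' hv1
  -- integrabilities
  have I1 : IntervalIntegrable f volume (v*a) 1 := lf v (v*a) 1 hv hva0 hv1 hva1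
  have I2 : IntervalIntegrable f volume 1 (Real.sqrt v) := lf v 1 _ hv zero_le_one hsvv hsv1
  have I3 : IntervalIntegrable f volume (Real.sqrt v) v :=
    lf v _ v hv (by linarith) le_rfl hsvv
  have I12 : IntervalIntegrable f volume 1 2 := lf v 1 2 hv zero_le_one hv one_le_two
  have I2v : IntervalIntegrable f volume 2 v := lf v 2 v hv (by norm_num) le_rfl hv
  have e1 : (∫ s in (v*a)..1, f s) + ∫ s in (1:ℝ)..v, f s = ∫ s in (v*a)..v, f s :=
    intervalIntegral.integral_add_adjacent_intervals I1 (I2.trans I3)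
  have e2 : (∫ s in (1:ℝ)..Real.sqrt v, f s) + ∫ s in Real.sqrt v..v, f s
      = ∫ s in (1:ℝ)..v, f s := intervalIntegral.integral_add_adjacent_intervals I2 I3
  have e2' : (∫ s in (1:ℝ)..2, f s) + ∫ s in (2:ℝ)..v, f s = ∫ s in (1:ℝ)..v, f s :=
    intervalIntegral.integral_add_adjacent_intervals I12 I2v
  constructor
  · -- lower bound
    have hmid : Real.exp (-2) / (3 * Real.log v) ≤ ∫ s in (1:ℝ)..2, f s := by
      have hc : (∫ s in (1:ℝ)..2, Real.exp (-2) / (3 * Real.log v))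
          = Real.exp (-2) / (3 * Real.log v) := by
        rw [intervalIntegral.integral_const]; norm_num
      rw [← hc]
      apply intervalIntegral.integral_mono_on one_le_two
        (intervalIntegrable_const) I12
      intro s hs
      have hs1 : 1 ≤ s := hs.1
      have hs2 : s ≤ 2 := hs.2
      have hNlb : Real.exp (-2) ≤ Real.exp (-s) * Real.sqrt s := by
        have h1 : Real.exp (-2) ≤ Real.exp (-s) := Real.exp_le_exp.2 (by linarith)
        have h2 : (1:ℝ) ≤ Real.sqrt s := by
          rw [show (1:ℝ) = Real.sqrt 1 by simp]; exact Real.sqrt_le_sqrt hs1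
        nlinarith [Real.exp_pos (-s)]
      have hD1 : (0:ℝ) < 1 - Real.log s + Real.log v := by
        have := dg v s hv1 (by linarith) (by linarith); linarith
      have hDub : 1 - Real.log s + Real.log v ≤ 3 * Real.log v := by
        have hls : 0 ≤ Real.log s := Real.log_nonneg hs1
        linarith
      exact div_le_div₀ (by positivity) hNlb hD1 hDub
    have h1nn : 0 ≤ ∫ s in (v*a)..1, f s :=
      intervalIntegral.integral_nonneg hva1 (fun u hu => hfnn u (le_trans hva0 hu.1) (by linarith [hu.2]))
    have h2nn : 0 ≤ ∫ s in (2:ℝ)..v, f s :=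
      intervalIntegral.integral_nonneg hv (fun u hu => hfnn u (by linarith [hu.1]) hu.2)
    have hc25 : (25:ℝ)⁻¹ / Real.log v ≤ Real.exp (-2) / (3 * Real.log v) := by
      have hexp2 : Real.exp 2 ≤ 25/3 := by
        have h := Real.exp_one_lt_d9
        have h2 : Real.exp 2 = Real.exp 1 * Real.exp 1 := by
          rw [← Real.exp_add]; norm_num
        nlinarith [Real.exp_pos 1]
      have h3 : (3:ℝ)/25 ≤ Real.exp (-2) := by
        rw [Real.exp_neg]
        have hinv : (Real.exp 2)⁻¹ * Real.exp 2 = 1 := inv_mul_cancel₀ (ne_of_gt (Real.exp_pos 2))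
        nlinarith [Real.exp_pos 2]
      have heq : Real.exp (-2) / (3 * Real.log v) = (Real.exp (-2)/3) / Real.log v := by
        rw [div_div]
      rw [heq]
      gcongr
      linarith
    linarith
  · -- upper bound
    have hA : (∫ s in (v*a)..1, f s) ≤ 1 / Real.log v := by
      have hc : (∫ s in (v*a)..1, 1 / Real.log v) = (1 - v*a) * (1 / Real.log v) := by
        rw [intervalIntegral.integral_const]; simp [smul_eq_mul]
      have hmono : (∫ s in (v*a)..1, f s) ≤ ∫ s in (v*a)..1, 1 / Real.log v := by
        apply intervalIntegral.integral_mono_on hva1 I1 intervalIntegrable_const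
        intro s hs
        have hs0 : 0 ≤ s := le_trans hva0 hs.1
        have hs1 : s ≤ 1 := hs.2
        have hN : Real.exp (-s) * Real.sqrt s ≤ 1 := by
          have h1 : Real.exp (-s) ≤ 1 := Real.exp_le_one_iff.2 (by linarith)
          have h2 : Real.sqrt s ≤ 1 := by
            rw [show (1:ℝ) = Real.sqrt 1 by simp]; exact Real.sqrt_le_sqrt hs1
          nlinarith [Real.exp_pos (-s), Real.sqrt_nonneg s]
        have hD : Real.log v ≤ 1 - Real.log s + Real.log v := by
          have hls : Real.log s ≤ 0 := by
            rcases eq_or_lt_of_le hs0 with h0 | h0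
            · simp [← h0]
            · exact Real.log_nonpos (le_of_lt h0) hs1
          linarith
        exact div_le_div₀ (by norm_num) hN hlv hD
      have : (1 - v*a) * (1 / Real.log v) ≤ 1 / Real.log v := by
        have h1 : 1 - v*a ≤ 1 := by linarith
        have h2 : (0:ℝ) ≤ 1 / Real.log v := by positivity
        nlinarith
      linarith
    have hB : (∫ s in (1:ℝ)..Real.sqrt v, f s) ≤ 8 / Real.log v := by
      have hmono : (∫ s in (1:ℝ)..Real.sqrt v, f s)
          ≤ ∫ s in (1:ℝ)..Real.sqrt v, (4 / Real.log v) * Real.exp (-s/2) := by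
        apply intervalIntegral.integral_mono_on hsv1 I2
          (Continuous.intervalIntegrable
            ((continuous_const.mul
              (Real.continuous_exp.comp (continuous_neg.div_const 2)))) _ _)
        intro s hs
        have hs1 : 1 ≤ s := hs.1
        have hsv : s ≤ v := le_trans hs.2 hsvv
        have hsqs : Real.sqrt s ≤ s := sqrt_le_self' hs1
        have hsexp : s ≤ 2 * Real.exp (s/2) := by
          have := Real.add_one_le_exp (s/2); linarith
        have hN : Real.exp (-s) * Real.sqrt s ≤ 2 * Real.exp (-s/2) := by
          calc Real.exp (-s) * Real.sqrt s ≤ Real.exp (-s) * s := by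
                apply mul_le_mul_of_nonneg_left hsqs (Real.exp_pos _).le
            _ ≤ Real.exp (-s) * (2 * Real.exp (s/2)) := by
                apply mul_le_mul_of_nonneg_left hsexp (Real.exp_pos _).le
            _ = 2 * Real.exp (-s + s/2) := by rw [Real.exp_add]; ring
            _ = 2 * Real.exp (-s/2) := by ring_nf
        have hDlb : Real.log v / 2 ≤ 1 - Real.log s + Real.log v := by
          have hls : Real.log s ≤ Real.log v / 2 := by
            rw [← Real.log_sqrt hv0]
            exact Real.log_le_log (by linarith) hs.2
          linarith
        calc f s ≤ (2 * Real.exp (-s/2)) / (Real.log v / 2) :=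
              div_le_div₀ (by positivity) hN (by positivity) hDlb
          _ = (4 / Real.log v) * Real.exp (-s/2) := by
              field_simp; ring
      have hcomp : (∫ s in (1:ℝ)..Real.sqrt v, (4 / Real.log v) * Real.exp (-s/2))
          = (4 / Real.log v) * (2*Real.exp (-1/2) - 2*Real.exp (-(Real.sqrt v)/2)) := by
        rw [intervalIntegral.integral_const_mul, ie]
      have hle : (4 / Real.log v) * (2*Real.exp (-1/2) - 2*Real.exp (-(Real.sqrt v)/2))
          ≤ 8 / Real.log v := by
        have h1 : Real.exp (-1/2) ≤ 1 := Real.exp_le_one_iff.2 (by norm_num)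
        have h2 : 0 ≤ Real.exp (-(Real.sqrt v)/2) := (Real.exp_pos _).le
        have h3 : (0:ℝ) ≤ 4 / Real.log v := by positivity
        calc (4 / Real.log v) * (2*Real.exp (-1/2) - 2*Real.exp (-(Real.sqrt v)/2))
            ≤ (4 / Real.log v) * 2 := mul_le_mul_of_nonneg_left (by linarith) h3
          _ = 8 / Real.log v := by ring
      linarith [hmono, hcomp.le, hcomp.ge]
    have hC : (∫ s in Real.sqrt v..v, f s) ≤ 16 / Real.log v := by
      have hmono : (∫ s in Real.sqrt v..v, f s)
          ≤ ∫ s in Real.sqrt v..v, (2:ℝ) * Real.exp (-s/2) := by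
        apply intervalIntegral.integral_mono_on hsvv I3
          (Continuous.intervalIntegrable
            ((continuous_const.mul
              (Real.continuous_exp.comp (continuous_neg.div_const 2)))) _ _)
        intro s hs
        have hs1 : 1 ≤ s := le_trans hsv1 hs.1
        have hsv : s ≤ v := hs.2
        have hsqs : Real.sqrt s ≤ s := sqrt_le_self' hs1
        have hsexp : s ≤ 2 * Real.exp (s/2) := by
          have := Real.add_one_le_exp (s/2); linarith
        have hN : Real.exp (-s) * Real.sqrt s ≤ 2 * Real.exp (-s/2) := by
          calc Real.exp (-s) * Real.sqrt s ≤ Real.exp (-s) * s := by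
                apply mul_le_mul_of_nonneg_left hsqs (Real.exp_pos _).le
            _ ≤ Real.exp (-s) * (2 * Real.exp (s/2)) := by
                apply mul_le_mul_of_nonneg_left hsexp (Real.exp_pos _).le
            _ = 2 * Real.exp (-s + s/2) := by rw [Real.exp_add]; ring
            _ = 2 * Real.exp (-s/2) := by ring_nf
        have hD : 1 ≤ 1 - Real.log s + Real.log v := dg v s hv1 (by linarith) hsv
        calc f s ≤ (2 * Real.exp (-s/2)) / 1 := div_le_div₀ (by positivity) hN one_pos hD
          _ = 2 * Real.exp (-s/2) := div_one _
      have hcomp : (∫ s in Real.sqrt v..v, (2:ℝ) * Real.exp (-s/2))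
          = 2 * (2*Real.exp (-(Real.sqrt v)/2) - 2*Real.exp (-v/2)) := by
        rw [intervalIntegral.integral_const_mul, ie]
      have hkey : 4 * Real.exp (-(Real.sqrt v)/2) ≤ 16 / Real.log v := by
        rw [le_div_iff₀ hlv]
        have hlogv_le : Real.log v ≤ 2 * Real.sqrt v := by
          have h := Real.log_le_sub_one_of_pos (show (0:ℝ) < Real.sqrt v by positivity)
          rw [Real.log_sqrt hv0] at h
          linarith
        have ht : Real.sqrt v ≤ 2 * Real.exp (Real.sqrt v / 2) := by
          have := Real.add_one_le_exp (Real.sqrt v / 2); linarith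
        have h1 : Real.log v ≤ 4 * Real.exp (Real.sqrt v / 2) := by linarith
        calc 4 * Real.exp (-(Real.sqrt v)/2) * Real.log v
            ≤ 4 * Real.exp (-(Real.sqrt v)/2) * (4 * Real.exp (Real.sqrt v/2)) := by
              apply mul_le_mul_of_nonneg_left h1 (by positivity)
          _ = 16 * Real.exp (-(Real.sqrt v)/2 + Real.sqrt v/2) := by
              rw [Real.exp_add]; ring
          _ = 16 := by
              rw [show -(Real.sqrt v)/2 + Real.sqrt v/2 = (0:ℝ) by ring, Real.exp_zero]
              norm_num
      have h2 : 0 ≤ Real.exp (-v/2) := (Real.exp_pos _).le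
      have : 2 * (2*Real.exp (-(Real.sqrt v)/2) - 2*Real.exp (-v/2))
          ≤ 16 / Real.log v := by nlinarith
      linarith [hmono, hcomp.le]
    have : (∫ s in (v*a)..v, f s) ≤ 1/Real.log v + 8/Real.log v + 16/Real.log v := by
      linarith
    calc (∫ s in (v*a)..v, f s) ≤ 1/Real.log v + 8/Real.log v + 16/Real.log v := this
      _ = 25 / Real.log v := by ring
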